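/- Every 2⊗d SPPT state of the form ρ = X†X with X = [[X₁, SX₁],[0, X₂]] satisfying X₁†S†SX₁ = X₁†SS†X₁ and rank(X₁†X₁) ≤ 3 is separable. (This uses the fact that every 2⊗k PPT state with k ≤ 3 is separable.) -/

import Mathlib

open Matrix Kronecker Finset ComplexOrder

/-- 2x2 block matrix with n×n blocks, indexed by `Fin 2 × n`. -/
def blk {n : Type*} (A B C D : Matrix n n ℂ) :
    Matrix (Fin 2 × n) (Fin 2 × n) ℂ := fun p q =>
  if p.1 = 0 then (if q.1 = 0 then A p.2 q.2 else B p.2 q.2)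
  else (if q.1 = 0 then C p.2 q.2 else D p.2 q.2)

/-- Partial transpose on the first (qubit) factor. -/
def ptA {n : Type*} (ρ : Matrix (Fin 2 × n) (Fin 2 × n) ℂ) :
    Matrix (Fin 2 × n) (Fin 2 × n) ℂ := fun p q => ρ (q.1, p.2) (p.1, q.2)

/-- Separability of an (unnormalized) state on ℂ²⊗ℂⁿ. -/
def SepState {n : Type*} [Fintype n] (ρ : Matrix (Fin 2 × n) (Fin 2 × n) ℂ) : Prop :=
  ∃ (N : ℕ) (σ : Fin N → Matrix (Fin 2) (Fin 2) ℂ) (P : Fin N → Matrix n n ℂ),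
    (∀ i, (σ i).PosSemidef) ∧ (∀ i, (P i).PosSemidef) ∧ ρ = ∑ i, σ i ⊗ₖ P i

/-- Rectangular 2x2 block matrix. -/
def blk' {m n : Type*} (A B C D : Matrix m n ℂ) :
    Matrix (Fin 2 × m) (Fin 2 × n) ℂ := fun p q =>
  if p.1 = 0 then (if q.1 = 0 then A p.2 q.2 else B p.2 q.2)
  else (if q.1 = 0 then C p.2 q.2 else D p.2 q.2)

lemma blk'_mul {m n p : Type*} [Fintype n] (A B C D : Matrix m n ℂ)
    (E F G H : Matrix n p ℂ) :
    blk' A B C D * blk' E F G H =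
      blk' (A*E + B*G) (A*F + B*H) (C*E + D*G) (C*F + D*H) := by
  funext q r
  obtain ⟨a, i⟩ := q; obtain ⟨b, j⟩ := r
  fin_cases a <;> fin_cases b <;>
    simp [blk', Matrix.mul_apply, Fintype.sum_prod_type, Fin.sum_univ_two,
      Finset.sum_add_distrib]

lemma blk'_ct {m n : Type*} (A B C D : Matrix m n ℂ) :
    (blk' A B C D)ᴴ = blk' Aᴴ Cᴴ Bᴴ Dᴴ := by
  funext q r
  obtain ⟨a, i⟩ := q; obtain ⟨b, j⟩ := r
  fin_cases a <;> fin_cases b <;> simp [blk', Matrix.conjTranspose_apply]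

lemma blk'_add {m n : Type*} (A B C D A' B' C' D' : Matrix m n ℂ) :
    blk' A B C D + blk' A' B' C' D' = blk' (A+A') (B+B') (C+C') (D+D') := by
  funext q r
  obtain ⟨a, i⟩ := q; obtain ⟨b, j⟩ := r
  fin_cases a <;> fin_cases b <;> simp [blk']

lemma blk'_congr {m n : Type*} {A B C D A' B' C' D' : Matrix m n ℂ}
    (hA : A = A') (hB : B = B') (hC : C = C') (hD : D = D') :
    blk' A B C D = blk' A' B' C' D' := by rw [hA, hB, hC, hD]

lemma kron_ct {m n p q : Type*} (A : Matrix m n ℂ) (B : Matrix p q ℂ) :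
    (A ⊗ₖ B)ᴴ = Aᴴ ⊗ₖ Bᴴ := by
  funext x y
  simp [Matrix.conjTranspose_apply]

lemma one_kron_blk' {m n : Type*} [DecidableEq (Fin 2)] (W : Matrix m n ℂ) :
    (1 : Matrix (Fin 2) (Fin 2) ℂ) ⊗ₖ W = blk' W 0 0 W := by
  funext q r
  obtain ⟨a, i⟩ := q; obtain ⟨b, j⟩ := r
  fin_cases a <;> fin_cases b <;> simp [blk', Matrix.one_apply]

lemma e11_kron_blk' {m n : Type*} (W : Matrix m n ℂ) :
    (!![0,0;0,(1:ℂ)]) ⊗ₖ W = blk' 0 0 0 W := by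
  funext q r
  obtain ⟨a, i⟩ := q; obtain ⟨b, j⟩ := r
  fin_cases a <;> fin_cases b <;> simp [blk']

lemma e11_psd : (!![0,0;0,(1:ℂ)]).PosSemidef := by
  have h : (!![0,0;0,(1:ℂ)]) = (!![0,0;0,(1:ℂ)])ᴴ * (!![0,0;0,(1:ℂ)]) := by
    funext i j
    fin_cases i <;> fin_cases j <;>
      simp [Matrix.mul_apply, Fin.sum_univ_two, Matrix.conjTranspose_apply]
  rw [h]
  exact Matrix.posSemidef_conjTranspose_mul_self _

lemma exists_fact {d : ℕ} (M : Matrix (Fin d) (Fin d) ℂ) :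
    ∃ (W : Matrix (Fin d) (Fin M.rank) ℂ) (F : Matrix (Fin M.rank) (Fin d) ℂ),
      Wᴴ * W = 1 ∧ M = W * F := by
  let V : Submodule ℂ (EuclideanSpace ℂ (Fin d)) :=
    (LinearMap.range M.mulVecLin).map (WithLp.linearEquiv 2 ℂ (Fin d → ℂ)).symm.toLinearMap
  have hdim : Module.finrank ℂ V = M.rank :=
    LinearEquiv.finrank_map_eq (WithLp.linearEquiv 2 ℂ (Fin d → ℂ)).symm _
  let b : OrthonormalBasis (Fin M.rank) ℂ V :=
    (stdOrthonormalBasis ℂ V).reindex (finCongr hdim)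
  let W : Matrix (Fin d) (Fin M.rank) ℂ := fun i k => (b k : EuclideanSpace ℂ (Fin d)) i
  have hcol : ∀ j : Fin d, WithLp.toLp 2 (fun i => M i j) ∈ V := by
    intro j
    refine ⟨M *ᵥ Pi.single j 1, ⟨Pi.single j 1, rfl⟩, ?_⟩
    show WithLp.toLp 2 _ = WithLp.toLp 2 _
    congr 1
    funext i
    show (M *ᵥ Pi.single j 1) i = M i j
    simp [Matrix.mulVec, dotProduct, Pi.single_apply, mul_ite]
  let v : Fin d → V := fun j => ⟨WithLp.toLp 2 (fun i => M i j), hcol j⟩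
  let F : Matrix (Fin M.rank) (Fin d) ℂ := fun k j => b.repr (v j) k
  refine ⟨W, F, ?_, ?_⟩
  · funext k l
    have := orthonormal_iff_ite.mp b.orthonormal k l
    simp [Submodule.coe_inner, PiLp.inner_apply, RCLike.inner_apply] at this
    rw [Matrix.mul_apply, Matrix.one_apply, ← this]
    exact Finset.sum_congr rfl (fun x _ => by rw [mul_comm]; rfl)
  · funext i j
    have h := b.sum_repr (v j)
    have h2 : ((∑ x : Fin M.rank, b.repr (v j) x • b x : V) : EuclideanSpace ℂ (Fin d)) i
        = M i j := congrArg (fun x : V => (x : EuclideanSpace ℂ (Fin d)) i) h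
    have h3 : ((↑(∑ x : Fin M.rank, b.repr (v j) x • b x) : EuclideanSpace ℂ (Fin d)) i)
        = ∑ x : Fin M.rank, b.repr (v j) x * (b x : EuclideanSpace ℂ (Fin d)) i := by
      rw [Submodule.coe_sum]
      rw [WithLp.ofLp_sum, Finset.sum_apply]; simp
    rw [h3] at h2
    rw [Matrix.mul_apply, ← h2]
    exact Finset.sum_congr rfl (fun x _ => mul_comm _ _)

theorem stmt11 {d : ℕ} (X₁ X₂ S : Matrix (Fin d) (Fin d) ℂ)
    (hsppt : X₁ᴴ * Sᴴ * S * X₁ = X₁ᴴ * S * Sᴴ * X₁)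
    (hrank : (X₁ᴴ * X₁).rank ≤ 3)
    (horodecki : ∀ k : ℕ, k ≤ 3 →
      ∀ τ : Matrix (Fin 2 × Fin k) (Fin 2 × Fin k) ℂ,
        τ.PosSemidef → (ptA τ).PosSemidef → SepState τ) :
    SepState ((blk X₁ (S * X₁) 0 X₂)ᴴ * blk X₁ (S * X₁) 0 X₂) := by
  obtain ⟨W, F, hW, hM⟩ := exists_fact X₁ᴴ
  have hr : X₁ᴴ.rank ≤ 3 := by
    rw [Matrix.rank_conjTranspose, ← Matrix.rank_conjTranspose_mul_self X₁]
    exact hrank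
  have hX₁ : X₁ = Fᴴ * Wᴴ := by
    have h := congrArg Matrix.conjTranspose hM
    simpa [Matrix.conjTranspose_mul] using h
  -- the SPPT hypothesis transported to F
  have hF : (F * Sᴴ) * (S * Fᴴ) = (F * S) * (Sᴴ * Fᴴ) := by
    have key : ∀ T₁ T₂ : Matrix (Fin d) (Fin d) ℂ,
        X₁ᴴ * T₁ * T₂ * X₁ = W * ((F * T₁) * (T₂ * Fᴴ)) * Wᴴ := by
      intro T₁ T₂
      have e : W * ((F * T₁) * (T₂ * Fᴴ)) * Wᴴ
          = (W * F) * (T₁ * (T₂ * (Fᴴ * Wᴴ))) := by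
        simp only [Matrix.mul_assoc]
      rw [e, ← hM, ← hX₁]
      simp only [Matrix.mul_assoc]
    have h1 : W * ((F * Sᴴ) * (S * Fᴴ)) * Wᴴ = W * ((F * S) * (Sᴴ * Fᴴ)) * Wᴴ := by
      rw [← key, ← key]; exact hsppt
    calc (F * Sᴴ) * (S * Fᴴ)
        = (Wᴴ * W) * ((F * Sᴴ) * (S * Fᴴ)) * (Wᴴ * W) := by
          rw [hW, Matrix.one_mul, Matrix.mul_one]
      _ = Wᴴ * (W * ((F * Sᴴ) * (S * Fᴴ)) * Wᴴ) * W := by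
          simp only [Matrix.mul_assoc]
      _ = Wᴴ * (W * ((F * S) * (Sᴴ * Fᴴ)) * Wᴴ) * W := by rw [h1]
      _ = (Wᴴ * W) * ((F * S) * (Sᴴ * Fᴴ)) * (Wᴴ * W) := by
          simp only [Matrix.mul_assoc]
      _ = (F * S) * (Sᴴ * Fᴴ) := by rw [hW, Matrix.one_mul, Matrix.mul_one]
  have hFr : F * (Sᴴ * (S * Fᴴ)) = F * (S * (Sᴴ * Fᴴ)) := by
    have := hF
    simp only [Matrix.mul_assoc] at this
    exact this
  set Y : Matrix (Fin 2 × Fin d) (Fin 2 × Fin X₁ᴴ.rank) ℂ :=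
    blk' Fᴴ (S * Fᴴ) 0 0 with hY
  set τ := Yᴴ * Y with hτ
  have hτpsd : τ.PosSemidef := Matrix.posSemidef_conjTranspose_mul_self Y
  have hτblk : τ = blk' (F * Fᴴ) (F * (S * Fᴴ)) ((F * Sᴴ) * Fᴴ) ((F * Sᴴ) * (S * Fᴴ)) := by
    rw [hτ, hY, blk'_ct, blk'_mul]
    simp [Matrix.conjTranspose_mul]
  have hptpsd : (ptA τ).PosSemidef := by
    have hpt : ptA τ = (blk' Fᴴ (Sᴴ * Fᴴ) 0 0)ᴴ * (blk' Fᴴ (Sᴴ * Fᴴ) 0 0) := by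
      rw [blk'_ct, blk'_mul]
      have h2 : ptA τ = blk' (F * Fᴴ) ((F * Sᴴ) * Fᴴ) (F * (S * Fᴴ)) ((F * Sᴴ) * (S * Fᴴ)) := by
        rw [hτblk]
        funext q r
        obtain ⟨a, i⟩ := q; obtain ⟨b, j⟩ := r
        fin_cases a <;> fin_cases b <;> simp [ptA, blk']
      rw [h2]
      simp only [Matrix.conjTranspose_mul, Matrix.conjTranspose_conjTranspose,
        Matrix.conjTranspose_zero, Matrix.zero_mul, Matrix.mul_zero, add_zero,
        zero_add]
      refine blk'_congr ?_ ?_ ?_ ?_ <;> simp only [Matrix.mul_assoc, hFr]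
    rw [hpt]
    exact Matrix.posSemidef_conjTranspose_mul_self _
  obtain ⟨N, σ, P, hσ, hP, hsum⟩ := horodecki X₁ᴴ.rank hr τ hτpsd hptpsd
  set G : Matrix (Fin 2 × Fin X₁ᴴ.rank) (Fin 2 × Fin d) ℂ :=
    (1 : Matrix (Fin 2) (Fin 2) ℂ) ⊗ₖ Wᴴ with hG
  have hGH : Gᴴ = (1 : Matrix (Fin 2) (Fin 2) ℂ) ⊗ₖ W := by
    rw [hG, kron_ct, Matrix.conjTranspose_one, Matrix.conjTranspose_conjTranspose]
  -- main decomposition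
  have hrho : (blk X₁ (S * X₁) 0 X₂)ᴴ * blk X₁ (S * X₁) 0 X₂
      = Gᴴ * τ * G + (!![0,0;0,(1:ℂ)]) ⊗ₖ (X₂ᴴ * X₂) := by
    have hYG : Y * G = blk' X₁ (S * X₁) 0 0 := by
      rw [hY, hG, one_kron_blk', blk'_mul]
      simp [hX₁, Matrix.mul_assoc]
    have hGτG : Gᴴ * τ * G = (Y * G)ᴴ * (Y * G) := by
      rw [hτ, Matrix.conjTranspose_mul]
      simp only [Matrix.mul_assoc]
    have hstep1 : (blk X₁ (S * X₁) 0 X₂)ᴴ * blk X₁ (S * X₁) 0 X₂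
        = blk' (X₁ᴴ*X₁) (X₁ᴴ*(S*X₁)) ((S*X₁)ᴴ*X₁) ((S*X₁)ᴴ*(S*X₁) + X₂ᴴ*X₂) := by
      show (blk' X₁ (S*X₁) 0 X₂)ᴴ * blk' X₁ (S*X₁) 0 X₂ = _
      rw [blk'_ct, blk'_mul]
      simp
    have hstep2 : (Y * G)ᴴ * (Y * G)
        = blk' (X₁ᴴ*X₁) (X₁ᴴ*(S*X₁)) ((S*X₁)ᴴ*X₁) ((S*X₁)ᴴ*(S*X₁)) := by
      rw [hYG, blk'_ct, blk'_mul]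
      simp
    rw [hstep1, hGτG, hstep2, e11_kron_blk', blk'_add]
    simp
  -- assemble the separable decomposition
  refine ⟨N + 1, Fin.cons !![0,0;0,(1:ℂ)] σ,
    Fin.cons (X₂ᴴ * X₂) (fun i => W * P i * Wᴴ), ?_, ?_, ?_⟩
  · intro i
    refine Fin.cases ?_ ?_ i
    · exact e11_psd
    · intro j; simpa using hσ j
  · intro i
    refine Fin.cases ?_ ?_ i
    · exact Matrix.posSemidef_conjTranspose_mul_self X₂
    · intro j; simpa using (hP j).mul_mul_conjTranspose_same W
  · rw [Fin.sum_univ_succ]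
    simp only [Fin.cons_zero, Fin.cons_succ]
    rw [hrho, add_comm]
    congr 1
    rw [hsum, Matrix.mul_sum, Matrix.sum_mul]
    refine Finset.sum_congr rfl (fun i _ => ?_)
    rw [hGH, hG]
    simp only [← Matrix.mul_kronecker_mul, Matrix.one_mul, Matrix.mul_one]
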